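/- Let p be an odd prime, χ a non-principal Dirichlet character mod p, and n, k integers coprime to p. Then ∑_{m=1}^{p-1} |∑_{a=1}^{p-1} χ(m·a + n·ā)·e(k·a/p)|² = p·(p - 3 - χ̄(-1)). -/

import Mathlib

open Finset Complex

/-- `e p x = e^{2πi x/p}` for `x : ZMod p`, using the canonical representative. -/
noncomputable def e (p : ℕ) [NeZero p] (x : ZMod p) : ℂ :=
  Complex.exp (2 * Real.pi * Complex.I * x.val / p)

section aux

variable {p : ℕ} [Fact p.Prime]

lemma e_eq (x : ZMod p) : e p x = ZMod.stdAddChar x := by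
  rw [ZMod.stdAddChar_apply, ZMod.toCircle_apply, e]

lemma e_add (x y : ZMod p) : e p (x + y) = e p x * e p y := by
  simp [e_eq, AddChar.map_add_eq_mul]

lemma e_zero : e p (0 : ZMod p) = 1 := by simp [e_eq]

lemma e_mul_e_neg (x : ZMod p) : e p x * e p (-x) = 1 := by
  rw [← e_add]; simp [e_zero]

lemma e_ne_zero (x : ZMod p) : e p x ≠ 0 := by
  intro h
  have := e_mul_e_neg x
  rw [h, zero_mul] at this
  exact zero_ne_one this

lemma abs_e (x : ZMod p) : ‖e p x‖ = 1 := by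
  rw [e_eq, ZMod.stdAddChar_apply]; exact Circle.norm_coe _

lemma conj_e (x : ZMod p) : (starRingEnd ℂ) (e p x) = e p (-x) := by
  have h2 : e p x * (starRingEnd ℂ) (e p x) = 1 := by
    rw [Complex.mul_conj]
    norm_cast
    rw [← Complex.sq_norm, abs_e, one_pow]
  exact mul_left_cancel₀ (e_ne_zero x) (h2.trans (e_mul_e_neg x).symm)

lemma sum_e_mul {c : ZMod p} (hc : c ≠ 0) : ∑ x : ZMod p, e p (c * x) = 0 := by
  have h := AddChar.sum_eq_zero_of_ne_one (ZMod.isPrimitive_stdAddChar p hc)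
  simp only [AddChar.mulShift_apply] at h
  simpa [e_eq] using h

lemma sum_e_mul_erase {c : ZMod p} (hc : c ≠ 0) :
    ∑ x ∈ (univ : Finset (ZMod p)).erase 0, e p (c * x) = -1 := by
  have h := Finset.sum_erase_add univ (fun x => e p (c * x)) (mem_univ (0 : ZMod p))
  simp only [mul_zero, e_zero, sum_e_mul hc] at h
  linear_combination h

variable (χ : DirichletCharacter ℂ p)

lemma conj_chi (a : ZMod p) : (starRingEnd ℂ) (χ a) = χ a⁻¹ := by
  rw [← MulChar.inv_apply']
  exact MulChar.star_apply' χ a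

lemma sum_chi_erase (hχ : χ ≠ 1) :
    ∑ x ∈ (univ : Finset (ZMod p)).erase 0, χ x = 0 := by
  have h := Finset.sum_erase_add univ (fun x => χ x) (mem_univ (0 : ZMod p))
  simp only [MulChar.sum_eq_zero_of_ne_one hχ, MulChar.map_zero, add_zero] at h
  exact h

/-- The key shifted character sum: for `α ≠ β`,
`∑ₘ χ(m+α) χ((m+β)⁻¹) = -1`. -/
lemma shift_sum (hχ : χ ≠ 1) {α β : ZMod p} (hab : α ≠ β) :
    ∑ m : ZMod p, χ (m + α) * χ (m + β)⁻¹ = -1 := by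
  have hres : ∑ m ∈ (univ : Finset (ZMod p)).erase (-β), χ (m + α) * χ (m + β)⁻¹
      = ∑ m : ZMod p, χ (m + α) * χ (m + β)⁻¹ := by
    apply Finset.sum_erase
    rw [neg_add_cancel, inv_zero, MulChar.map_zero, mul_zero]
  rw [← hres]
  have key : ∑ m ∈ (univ : Finset (ZMod p)).erase (-β), χ (m + α) * χ (m + β)⁻¹
      = ∑ t ∈ (univ : Finset (ZMod p)).erase 1, χ t := by
    refine Finset.sum_bij' (fun m _ => (m + α) * (m + β)⁻¹)
      (fun t _ => (α - t * β) * (t - 1)⁻¹) ?_ ?_ ?_ ?_ ?_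
    · intro m hm
      have hmβ : m + β ≠ 0 := by
        intro h
        exact (Finset.mem_erase.mp hm).1 (by linear_combination h)
      rw [Finset.mem_erase]
      refine ⟨fun h => hab ?_, mem_univ _⟩
      field_simp at h
      linear_combination h
    · intro t ht
      have ht1 : t - 1 ≠ 0 := by
        intro h
        exact (Finset.mem_erase.mp ht).1 (by linear_combination h)
      rw [Finset.mem_erase]
      refine ⟨fun h => hab ?_, mem_univ _⟩
      field_simp at h
      linear_combination h
    · intro m hm
      have hmβ : m + β ≠ 0 := by
        intro h
        exact (Finset.mem_erase.mp hm).1 (by linear_combination h)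
      have h1 : (m + α) * (m + β)⁻¹ - 1 = (α - β) * (m + β)⁻¹ := by
        field_simp
        try ring
      have hαβ : α - β ≠ 0 := sub_ne_zero.mpr hab
      field_simp [h1]
      try ring
      rw [← sub_mul, show α * m - m * β = m * (α - β) by ring, mul_assoc, mul_inv_cancel₀ hαβ, mul_one]
    · intro t ht
      have ht1 : t - 1 ≠ 0 := by
        intro h
        exact (Finset.mem_erase.mp ht).1 (by linear_combination h)
      have h2 : (α - t * β) * (t - 1)⁻¹ + β = (α - β) * (t - 1)⁻¹ := by
        field_simp
        ring
      have hαβ : α - β ≠ 0 := sub_ne_zero.mpr hab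
      have h3 : (α - t * β) * (t - 1)⁻¹ + α = t * ((α - β) * (t - 1)⁻¹) := by
        field_simp
        ring
      show ((α - t * β) * (t - 1)⁻¹ + α) * ((α - t * β) * (t - 1)⁻¹ + β)⁻¹ = t
      rw [h2, h3]
      field_simp
    · intro m hm
      rw [← map_mul]
  rw [key]
  have h := Finset.sum_erase_add univ (fun x => χ x) (mem_univ (1 : ZMod p))
  simp only [MulChar.sum_eq_zero_of_ne_one hχ, MulChar.map_one] at h
  linear_combination h


lemma chi_inner_sum (hχ : χ ≠ 1) {ν a b : ZMod p} (hν : ν ≠ 0) (ha : a ≠ 0) (hb : b ≠ 0) :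
    ∑ m ∈ (univ : Finset (ZMod p)).erase 0, χ (m * a + ν * a⁻¹) * χ (m * b + ν * b⁻¹)⁻¹
      = χ (a * b⁻¹) * ((if a = b ∨ a = -b then (p : ℂ) else 0) - 1) - χ (b * a⁻¹) := by
  set α := ν * (a⁻¹ * a⁻¹) with hα
  set β := ν * (b⁻¹ * b⁻¹) with hβ
  have hterm : ∀ m : ZMod p, χ (m * a + ν * a⁻¹) * χ (m * b + ν * b⁻¹)⁻¹
      = (χ a * χ b⁻¹) * (χ (m + α) * χ (m + β)⁻¹) := by
    intro m
    have e1 : m * a + ν * a⁻¹ = a * (m + α) := by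
      rw [hα]; field_simp
    have e2 : m * b + ν * b⁻¹ = b * (m + β) := by
      rw [hβ]; field_simp
    rw [e1, e2, map_mul, mul_inv_rev, map_mul]
    ring
  have hfull : ∑ m : ZMod p, χ (m * a + ν * a⁻¹) * χ (m * b + ν * b⁻¹)⁻¹
      = (χ a * χ b⁻¹) * ∑ m : ZMod p, χ (m + α) * χ (m + β)⁻¹ := by
    rw [Finset.mul_sum]; exact Finset.sum_congr rfl fun m _ => hterm m
  have hzero : χ ((0 : ZMod p) * a + ν * a⁻¹) * χ ((0 : ZMod p) * b + ν * b⁻¹)⁻¹ = χ (b * a⁻¹) := by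
    rw [zero_mul, zero_mul, zero_add, zero_add, ← map_mul]
    congr 1
    field_simp
  have hcase : (α = β) ↔ (a = b ∨ a = -b) := by
    rw [hα, hβ, mul_right_inj' hν, ← mul_inv, ← mul_inv, inv_inj, mul_self_eq_mul_self_iff]
  have hmain : ∑ m : ZMod p, χ (m + α) * χ (m + β)⁻¹
      = (if a = b ∨ a = -b then (p : ℂ) else 0) - 1 := by
    by_cases hcab : a = b ∨ a = -b
    · rw [if_pos hcab, ← hcase.mpr hcab]
      have h1 : ∀ m : ZMod p, χ (m + α) * χ (m + α)⁻¹
          = 1 - (if m = -α then (1 : ℂ) else 0) := by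
        intro m
        by_cases h : m + α = 0
        · have hm : m = -α := by linear_combination h
          rw [h, inv_zero, MulChar.map_zero, mul_zero, if_pos hm]
          ring
        · have hm : ¬ m = -α := fun hc => h (by rw [hc]; ring)
          rw [← map_mul, mul_inv_cancel₀ h, MulChar.map_one, if_neg hm]
          ring
      rw [Finset.sum_congr rfl fun m _ => h1 m, Finset.sum_sub_distrib,
        Finset.sum_const, Finset.sum_ite_eq' univ (-α) (fun _ => (1 : ℂ)),
        if_pos (mem_univ _), card_univ, ZMod.card, nsmul_eq_mul, mul_one]
    · rw [if_neg hcab, shift_sum χ hχ (fun h => hcab (hcase.mp h)), zero_sub]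
  have h := Finset.sum_erase_add univ
    (fun m => χ (m * a + ν * a⁻¹) * χ (m * b + ν * b⁻¹)⁻¹) (mem_univ (0 : ZMod p))
  rw [hzero, hfull, hmain, ← map_mul] at h
  linear_combination h

lemma key2 (hχ : χ ≠ 1) (c : ZMod p → ZMod p) (hc : ∀ t, c t = 0 ↔ t = 1) :
    ∑ t ∈ (univ : Finset (ZMod p)).erase 0,
      ∑ b ∈ (univ : Finset (ZMod p)).erase 0, χ t * e p (c t * b) = p := by
  have hin : ∀ t : ZMod p, (∑ b ∈ (univ : Finset (ZMod p)).erase 0, e p (c t * b))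
      = (if t = 1 then (p : ℂ) else 0) - 1 := by
    intro t
    by_cases h : t = 1
    · rw [if_pos h]
      have hct : c t = 0 := (hc t).mpr h
      simp only [hct, zero_mul, e_zero]
      rw [Finset.sum_const, Finset.card_erase_of_mem (mem_univ _), card_univ, ZMod.card,
        nsmul_eq_mul, mul_one, Nat.cast_sub (Nat.Prime.one_lt Fact.out).le]
      · norm_num
    · rw [if_neg h, sum_e_mul_erase (fun h0 => h ((hc t).mp h0)), zero_sub]
  have step : ∀ t ∈ (univ : Finset (ZMod p)).erase 0,
      ∑ b ∈ (univ : Finset (ZMod p)).erase 0, χ t * e p (c t * b)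
        = (if t = 1 then χ t * (p : ℂ) else 0) - χ t := by
    intro t _
    rw [← Finset.mul_sum, hin t]
    by_cases h : t = 1 <;> simp [h]
  rw [Finset.sum_congr rfl step, Finset.sum_sub_distrib,
    Finset.sum_ite_eq' _ (1 : ZMod p) (fun t => χ t * (p : ℂ)), sum_chi_erase χ hχ,
    if_pos (Finset.mem_erase.mpr ⟨one_ne_zero, mem_univ _⟩), MulChar.map_one]
  ring

lemma P2lem (hχ : χ ≠ 1) {κ : ZMod p} (hκ : κ ≠ 0) :
    ∑ a ∈ (univ : Finset (ZMod p)).erase 0, ∑ b ∈ (univ : Finset (ZMod p)).erase 0,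
      (e p (κ * a) * e p (-(κ * b))) * χ (a * b⁻¹) = p := by
  rw [Finset.sum_comm]
  have hb : ∀ b ∈ (univ : Finset (ZMod p)).erase 0,
      ∑ a ∈ (univ : Finset (ZMod p)).erase 0, (e p (κ * a) * e p (-(κ * b))) * χ (a * b⁻¹)
      = ∑ t ∈ (univ : Finset (ZMod p)).erase 0, χ t * e p ((κ * (t - 1)) * b) := by
    intro b hbm
    have hbne : b ≠ 0 := (Finset.mem_erase.mp hbm).1
    refine Finset.sum_bij' (fun a _ => a * b⁻¹) (fun t _ => t * b) ?_ ?_ ?_ ?_ ?_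
    · intro a ham
      exact Finset.mem_erase.mpr
        ⟨mul_ne_zero (Finset.mem_erase.mp ham).1 (inv_ne_zero hbne), mem_univ _⟩
    · intro t htm
      exact Finset.mem_erase.mpr
        ⟨mul_ne_zero (Finset.mem_erase.mp htm).1 hbne, mem_univ _⟩
    · intro a _
      field_simp
    · intro t _
      field_simp
    · intro a ham
      have h1 : (κ * (a * b⁻¹ - 1)) * b = κ * a + -(κ * b) := by
        field_simp
        ring
      rw [h1, e_add]
      have h2 : a * b⁻¹ * b * b⁻¹ = a * b⁻¹ := by field_simp
      ring
  rw [Finset.sum_congr rfl hb, Finset.sum_comm]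
  refine key2 χ hχ (fun t => κ * (t - 1)) (fun t => ?_)
  rw [mul_eq_zero, sub_eq_zero]
  simp [hκ]

lemma P3lem (hχ : χ ≠ 1) {κ : ZMod p} (hκ : κ ≠ 0) :
    ∑ a ∈ (univ : Finset (ZMod p)).erase 0, ∑ b ∈ (univ : Finset (ZMod p)).erase 0,
      (e p (κ * a) * e p (-(κ * b))) * χ (b * a⁻¹) = p := by
  have hb : ∀ a ∈ (univ : Finset (ZMod p)).erase 0,
      ∑ b ∈ (univ : Finset (ZMod p)).erase 0, (e p (κ * a) * e p (-(κ * b))) * χ (b * a⁻¹)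
      = ∑ t ∈ (univ : Finset (ZMod p)).erase 0, χ t * e p ((κ * (1 - t)) * a) := by
    intro a ham
    have hane : a ≠ 0 := (Finset.mem_erase.mp ham).1
    refine Finset.sum_bij' (fun b _ => b * a⁻¹) (fun t _ => t * a) ?_ ?_ ?_ ?_ ?_
    · intro b hbm
      exact Finset.mem_erase.mpr
        ⟨mul_ne_zero (Finset.mem_erase.mp hbm).1 (inv_ne_zero hane), mem_univ _⟩
    · intro t htm
      exact Finset.mem_erase.mpr
        ⟨mul_ne_zero (Finset.mem_erase.mp htm).1 hane, mem_univ _⟩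
    · intro b _
      field_simp
    · intro t _
      field_simp
    · intro b hbm
      have h1 : (κ * (1 - b * a⁻¹)) * a = κ * a + -(κ * b) := by
        field_simp
        ring
      rw [h1, e_add]
      have h2 : b * a⁻¹ * a * a⁻¹ = b * a⁻¹ := by field_simp
      ring
  rw [Finset.sum_congr rfl hb, Finset.sum_comm]
  refine key2 χ hχ (fun t => κ * (1 - t)) (fun t => ?_)
  rw [mul_eq_zero, sub_eq_zero]
  constructor
  · rintro (h | h)
    · exact absurd h hκ
    · exact h.symm
  · intro h
    exact Or.inr h.symm

lemma P1lem (hp : Odd p) {κ : ZMod p} (hκ : κ ≠ 0) :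
    ∑ a ∈ (univ : Finset (ZMod p)).erase 0, ∑ b ∈ (univ : Finset (ZMod p)).erase 0,
      (e p (κ * a) * e p (-(κ * b))) * χ (a * b⁻¹) * (if a = b ∨ a = -b then (p : ℂ) else 0)
      = (p : ℂ) * ((p : ℂ) - 1) - (p : ℂ) * χ (-1) := by
  have hp2 : (2 : ZMod p) ≠ 0 := by
    have h2 : ¬ ((2 : ℕ) : ZMod p) = 0 := by
      rw [ZMod.natCast_eq_zero_iff]
      intro h
      have heq := (Nat.prime_dvd_prime_iff_eq (Fact.out : p.Prime) Nat.prime_two).mp h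
      rw [heq] at hp
      exact (Nat.not_odd_iff_even.mpr even_two) hp
    simpa using h2
  have hneg : ∀ a : ZMod p, a ≠ 0 → ¬ a = -a := by
    intro a ha h
    apply ha
    have h2 : 2 * a = 0 := by linear_combination h
    rcases mul_eq_zero.mp h2 with h | h
    · exact absurd h hp2
    · exact h
  have hrow : ∀ a ∈ (univ : Finset (ZMod p)).erase 0,
      ∑ b ∈ (univ : Finset (ZMod p)).erase 0,
        (e p (κ * a) * e p (-(κ * b))) * χ (a * b⁻¹) * (if a = b ∨ a = -b then (p : ℂ) else 0)
      = (p : ℂ) + (p : ℂ) * χ (-1) * e p ((κ + κ) * a) := by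
    intro a ham
    have hane : a ≠ 0 := (Finset.mem_erase.mp ham).1
    have hsplit : ∀ b ∈ (univ : Finset (ZMod p)).erase 0,
        (e p (κ * a) * e p (-(κ * b))) * χ (a * b⁻¹) * (if a = b ∨ a = -b then (p : ℂ) else 0)
        = (if b = a then (p : ℂ) else 0)
          + (if b = -a then (p : ℂ) * χ (-1) * e p ((κ + κ) * a) else 0) := by
      intro b hbm
      have hbne : b ≠ 0 := (Finset.mem_erase.mp hbm).1
      by_cases h1 : b = a
      · subst h1
        rw [if_pos rfl, if_neg (hneg b hbne), if_pos (Or.inl rfl)]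
        rw [mul_inv_cancel₀ hbne, MulChar.map_one, e_mul_e_neg]
        ring
      · by_cases h2 : b = -a
        · subst h2
          rw [if_neg h1, if_pos rfl]
        
          have hcond : a = -a ∨ a = - -a := Or.inr (neg_neg a).symm
          rw [if_pos hcond]
          have h3 : a * (-a)⁻¹ = -1 := by
            rw [inv_neg, mul_neg, mul_inv_cancel₀ hane]
          have h4 : -(κ * -a) = κ * a := by ring
          have h5 : (κ + κ) * a = κ * a + κ * a := by ring
          rw [h3, h4, h5, e_add]
          ring
        · have hcond : ¬ (a = b ∨ a = -b) := by
            rintro (h | h)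
            · exact h1 h.symm
            · apply h2
              rw [h]
              ring
          rw [if_neg hcond, if_neg h1, if_neg h2, mul_zero, add_zero]
    rw [Finset.sum_congr rfl hsplit, Finset.sum_add_distrib,
      Finset.sum_ite_eq' _ a (fun _ => (p : ℂ)),
      Finset.sum_ite_eq' _ (-a) (fun _ => (p : ℂ) * χ (-1) * e p ((κ + κ) * a)),
      if_pos ham, if_pos (Finset.mem_erase.mpr ⟨neg_ne_zero.mpr hane, mem_univ _⟩)]
  rw [Finset.sum_congr rfl hrow, Finset.sum_add_distrib, Finset.sum_const,
    Finset.card_erase_of_mem (mem_univ _), card_univ, ZMod.card,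
    ← Finset.mul_sum]
  have h2κ : κ + κ ≠ 0 := by
    intro h
    have h2 : 2 * κ = 0 := by linear_combination h
    rcases mul_eq_zero.mp h2 with h | h
    · exact absurd h hp2
    · exact absurd h hκ
  rw [sum_e_mul_erase h2κ, nsmul_eq_mul, Nat.cast_sub (Nat.Prime.one_lt Fact.out).le]
  push_cast
  ring

end aux

theorem stmt_1 (p : ℕ) [Fact p.Prime] (hp : Odd p) (χ : DirichletCharacter ℂ p)
    (hχ : χ ≠ 1) (n k : ℤ) (hn : IsCoprime n (p : ℤ)) (hk : IsCoprime k (p : ℤ)) :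
    ∑ m ∈ univ.filter (fun m : ZMod p => m ≠ 0),
      (‖∑ a ∈ univ.filter (fun a : ZMod p => a ≠ 0),
        χ ((m : ZMod p) * a + (n : ZMod p) * a⁻¹) * e p ((k : ZMod p) * a)‖) ^ 2
      = p * (p - 3 - (starRingEnd ℂ) (χ (-1))) := by
  have hcop : ∀ j : ℤ, IsCoprime j (p : ℤ) → (j : ZMod p) ≠ 0 := by
    intro j hj
    have h := hj.map (Int.castRingHom (ZMod p))
    simp only [Int.castRingHom, RingHom.coe_mk, MonoidHom.coe_mk, OneHom.coe_mk] at h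
    have hp0 : (((p : ℤ) : ZMod p)) = 0 := by
      push_cast
      exact ZMod.natCast_self p
    rw [hp0] at h
    exact (isCoprime_zero_right.mp h).ne_zero
  have hν : ((n : ZMod p)) ≠ 0 := hcop n hn
  have hκ : ((k : ZMod p)) ≠ 0 := hcop k hk
  set ν : ZMod p := (n : ZMod p)
  set κ : ZMod p := (k : ZMod p)
  simp only [Finset.filter_ne']
  push_cast
  have hsq : ∀ z : ℂ, ((‖z‖ : ℝ) : ℂ) ^ 2 = z * (starRingEnd ℂ) z := by
    intro z
    rw [Complex.mul_conj]
    norm_cast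
    exact Complex.sq_norm z
  have hconj : ∀ m : ZMod p,
      (starRingEnd ℂ) (∑ b ∈ (univ : Finset (ZMod p)).erase 0, χ (m * b + ν * b⁻¹) * e p (κ * b))
      = ∑ b ∈ (univ : Finset (ZMod p)).erase 0, χ ((m * b + ν * b⁻¹)⁻¹) * e p (-(κ * b)) := by
    intro m
    rw [map_sum]
    exact Finset.sum_congr rfl fun b _ => by rw [map_mul, conj_chi, conj_e]
  calc ∑ m ∈ (univ : Finset (ZMod p)).erase 0,
      ((‖∑ a ∈ (univ : Finset (ZMod p)).erase 0,
        χ (m * a + ν * a⁻¹) * e p (κ * a)‖ : ℝ) : ℂ) ^ 2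
      = ∑ m ∈ (univ : Finset (ZMod p)).erase 0, ∑ a ∈ (univ : Finset (ZMod p)).erase 0,
          ∑ b ∈ (univ : Finset (ZMod p)).erase 0,
          (χ (m * a + ν * a⁻¹) * e p (κ * a)) * (χ ((m * b + ν * b⁻¹)⁻¹) * e p (-(κ * b))) := by
        refine Finset.sum_congr rfl fun m _ => ?_
        rw [hsq, hconj m, Finset.sum_mul_sum]
    _ = ∑ a ∈ (univ : Finset (ZMod p)).erase 0, ∑ b ∈ (univ : Finset (ZMod p)).erase 0,
          (e p (κ * a) * e p (-(κ * b)))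
            * ∑ m ∈ (univ : Finset (ZMod p)).erase 0,
                χ (m * a + ν * a⁻¹) * χ ((m * b + ν * b⁻¹)⁻¹) := by
        rw [Finset.sum_comm]
        refine Finset.sum_congr rfl fun a _ => ?_
        rw [Finset.sum_comm]
        refine Finset.sum_congr rfl fun b _ => ?_
        rw [Finset.mul_sum]
        exact Finset.sum_congr rfl fun m _ => by ring
    _ = ∑ a ∈ (univ : Finset (ZMod p)).erase 0, ∑ b ∈ (univ : Finset (ZMod p)).erase 0,
          (e p (κ * a) * e p (-(κ * b)))
            * (χ (a * b⁻¹) * ((if a = b ∨ a = -b then (p : ℂ) else 0) - 1) - χ (b * a⁻¹)) := by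
        refine Finset.sum_congr rfl fun a ha => Finset.sum_congr rfl fun b hb => ?_
        rw [chi_inner_sum χ hχ hν (Finset.mem_erase.mp ha).1 (Finset.mem_erase.mp hb).1]
    _ = (∑ a ∈ (univ : Finset (ZMod p)).erase 0, ∑ b ∈ (univ : Finset (ZMod p)).erase 0,
          (e p (κ * a) * e p (-(κ * b))) * χ (a * b⁻¹) * (if a = b ∨ a = -b then (p : ℂ) else 0))
        - (∑ a ∈ (univ : Finset (ZMod p)).erase 0, ∑ b ∈ (univ : Finset (ZMod p)).erase 0,
          (e p (κ * a) * e p (-(κ * b))) * χ (a * b⁻¹))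
        - (∑ a ∈ (univ : Finset (ZMod p)).erase 0, ∑ b ∈ (univ : Finset (ZMod p)).erase 0,
          (e p (κ * a) * e p (-(κ * b))) * χ (b * a⁻¹)) := by
        rw [← Finset.sum_sub_distrib, ← Finset.sum_sub_distrib]
        refine Finset.sum_congr rfl fun a _ => ?_
        rw [← Finset.sum_sub_distrib, ← Finset.sum_sub_distrib]
        exact Finset.sum_congr rfl fun b _ => by ring
    _ = ((p : ℂ) * ((p : ℂ) - 1) - (p : ℂ) * χ (-1)) - p - p := by
        rw [P1lem χ hp hκ, P2lem χ hχ hκ, P3lem χ hχ hκ]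
    _ = p * (p - 3 - (starRingEnd ℂ) (χ (-1))) := by
        rw [conj_chi]
        have : ((-1 : ZMod p))⁻¹ = -1 := by
          rw [inv_neg, inv_one]
        rw [this]
        ring
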